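/- arXiv:2301.00940 — 2 statements merged into one kernel-verified Lean document; each statement's English description precedes it below -/
import Mathlib

section
/- Let {S_μ(x)} (0 < μ ≤ μ_0, x ∈ B_{0.8} ⊂ R^{2n}) satisfy the section-family axioms and additionally 10 S_μ(x) ⊂ S_{121μ}(x) ⊂ 12 S_μ(x) for every x and every 0 < μ ≤ μ_0/121. Let X, Y ⊂ B_{0.8} be measurable and 0 < ε̄ < 1. Assume (a) for every x_0 ∈ B_{0.8} and every μ with μ_0/484 ≤ μ ≤ μ_0/4, m(S_μ(x_0) ∩ X) < ε̄·m(S_μ(x_0)); and (b) whenever m(S_μ(x) ∩ X) ≥ ε̄·m(S_μ(x)) with μ ≤ μ_0/2, then S_μ(x) ⊂ Y. Then m(X) ≤ 12^{2n}·ε̄·m(Y). -/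
open Metric MeasureTheory Set Filter
open scoped ENNReal Topology

/-- Dilation of a pointed set `S` about the point `x₀` by a factor `c`. -/
def dilate {E : Type*} [NormedAddCommGroup E] [NormedSpace ℝ E]
    (c : ℝ) (x₀ : E) (S : Set E) : Set E :=
  (fun y => x₀ + c • (y - x₀)) '' S

section dil
variable {E : Type*} [NormedAddCommGroup E] [NormedSpace ℝ E] (c c' : ℝ) (x : E) (s t : Set E)

lemma dilate_mono (h : s ⊆ t) : dilate c x s ⊆ dilate c x t := Set.image_mono h

lemma dilate_dilate : dilate c x (dilate c' x s) = dilate (c * c') x s := by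
  unfold dilate
  rw [Set.image_image]
  apply Set.image_congr
  intro y _
  simp [smul_smul]

lemma dilate_one : dilate 1 x s = s := by
  unfold dilate; simp

lemma dilate_eq_homothety : dilate c x s = AffineMap.homothety x c '' s := by
  unfold dilate
  apply Set.image_congr
  intro y _
  simp [AffineMap.homothety_apply]
  abel

lemma subset_of_dilate_subset (hc : c ≠ 0) (h : s ⊆ dilate c x t) :
    dilate c⁻¹ x s ⊆ t := by
  intro z hz
  have h2 := dilate_mono c⁻¹ x _ _ h hz
  rw [dilate_dilate, inv_mul_cancel₀ hc, dilate_one] at h2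
  exact h2

lemma dilate_subset_closedBall {r : ℝ} (hc : 0 ≤ c) (h : s ⊆ closedBall x r) :
    dilate c x s ⊆ closedBall x (c * r) := by
  rintro _ ⟨y, hy, rfl⟩
  have hyr := h hy
  rw [mem_closedBall] at hyr ⊢
  have hnorm : dist (x + c • (y - x)) x = c * ‖y - x‖ := by
    rw [dist_eq_norm, add_sub_cancel_left, norm_smul, Real.norm_eq_abs, abs_of_nonneg hc]
  rw [hnorm]
  apply mul_le_mul_of_nonneg_left _ hc
  rwa [← dist_eq_norm]

end dil

lemma volume_dilate {N : ℕ} (c : ℝ) (x : EuclideanSpace ℝ (Fin N))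
    (s : Set (EuclideanSpace ℝ (Fin N))) :
    volume (dilate c x s) = ENNReal.ofReal (|c| ^ N) * volume s := by
  rw [dilate_eq_homothety, Measure.addHaar_image_homothety, abs_pow, finrank_euclideanSpace_fin]

set_option maxHeartbeats 3000000 in
/-- Measure-theoretic covering estimate: if a section family on `B_{0.8} ⊆ ℝ^{2n}`
satisfies the section-family axioms together with
`10 S_μ(x) ⊆ S_{121μ}(x) ⊆ 12 S_μ(x)` for `μ ≤ μ₀/121`, and `X, Y ⊆ B_{0.8}` are
measurable with (a) `m(S_μ(x₀) ∩ X) < ε̄ m(S_μ(x₀))` for `μ₀/484 ≤ μ ≤ μ₀/4`, and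
(b) `S_μ(x) ⊆ Y` whenever `m(S_μ(x) ∩ X) ≥ ε̄ m(S_μ(x))` with `μ ≤ μ₀/2`, then
`m(X) ≤ 12^{2n} ε̄ m(Y)`. -/
theorem section_covering_estimate (n : ℕ)
    (μ₀ : ℝ) (hμ₀ : 0 < μ₀)
    (S : ℝ → EuclideanSpace ℝ (Fin (2 * n)) → Set (EuclideanSpace ℝ (Fin (2 * n))))
    (hmeas : ∀ μ x, MeasurableSet (S μ x))
    (hsub : ∀ μ x, 0 < μ → μ ≤ μ₀ → x ∈ ball (0 : EuclideanSpace ℝ (Fin (2 * n))) 0.8 →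
      S μ x ⊆ ball (0 : EuclideanSpace ℝ (Fin (2 * n))) 1)
    (C : ℝ) (hC : 0 < C)
    (hvol : ∀ μ x, 0 < μ → μ ≤ μ₀ → x ∈ ball (0 : EuclideanSpace ℝ (Fin (2 * n))) 0.8 →
      volume (ball (0 : EuclideanSpace ℝ (Fin (2 * n))) (Real.sqrt μ))
          ≤ ENNReal.ofReal C * volume (S μ x) ∧
      volume (S μ x)
          ≤ ENNReal.ofReal C * volume (ball (0 : EuclideanSpace ℝ (Fin (2 * n))) (Real.sqrt μ)))
    (heng : ∀ μ₁ μ₂ x₁ x₂, 0 < μ₁ → μ₁ ≤ μ₀ → 0 < μ₂ → μ₂ ≤ μ₀ →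
      x₁ ∈ ball (0 : EuclideanSpace ℝ (Fin (2 * n))) 0.8 →
      x₂ ∈ ball (0 : EuclideanSpace ℝ (Fin (2 * n))) 0.8 →
      Real.sqrt μ₁ ≤ 2 * Real.sqrt μ₂ → (S μ₁ x₁ ∩ S μ₂ x₂).Nonempty →
      S μ₁ x₁ ⊆ dilate 10 x₂ (S μ₂ x₂))
    (hdiam : ∀ ε > (0 : ℝ), ∃ δ > (0 : ℝ), ∀ μ x, 0 < μ → μ ≤ δ → μ ≤ μ₀ →
      x ∈ ball (0 : EuclideanSpace ℝ (Fin (2 * n))) 0.8 → Metric.diam (S μ x) ≤ ε)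
    (hnest : ∀ μ x, 0 < μ → μ ≤ μ₀ / 121 →
      x ∈ ball (0 : EuclideanSpace ℝ (Fin (2 * n))) 0.8 →
      dilate 10 x (S μ x) ⊆ S (121 * μ) x ∧ S (121 * μ) x ⊆ dilate 12 x (S μ x))
    (X Y : Set (EuclideanSpace ℝ (Fin (2 * n))))
    (hX : MeasurableSet X) (hY : MeasurableSet Y)
    (hXsub : X ⊆ ball (0 : EuclideanSpace ℝ (Fin (2 * n))) 0.8)
    (hYsub : Y ⊆ ball (0 : EuclideanSpace ℝ (Fin (2 * n))) 0.8)
    (ebar : ℝ) (hebar : 0 < ebar) (hebar1 : ebar < 1)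
    (ha : ∀ x₀ ∈ ball (0 : EuclideanSpace ℝ (Fin (2 * n))) 0.8, ∀ μ : ℝ,
      μ₀ / 484 ≤ μ → μ ≤ μ₀ / 4 →
      volume (S μ x₀ ∩ X) < ENNReal.ofReal ebar * volume (S μ x₀))
    (hb : ∀ x ∈ ball (0 : EuclideanSpace ℝ (Fin (2 * n))) 0.8, ∀ μ : ℝ, 0 < μ → μ ≤ μ₀ / 2 →
      ENNReal.ofReal ebar * volume (S μ x) ≤ volume (S μ x ∩ X) → S μ x ⊆ Y) :
    volume X ≤ ENNReal.ofReal ((12 : ℝ) ^ (2 * n) * ebar) * volume Y := by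
  classical
  have h2n : Module.finrank ℝ (EuclideanSpace ℝ (Fin (2 * n))) = 2 * n :=
    finrank_euclideanSpace_fin
  set B08 := ball (0 : EuclideanSpace ℝ (Fin (2 * n))) 0.8 with hB08
  -- numeric facts
  have h121 : μ₀ / 484 ≤ μ₀ / 121 := by linarith
  have h121' : μ₀ / 121 ≤ μ₀ := by linarith
  have h484μ : μ₀ / 484 ≤ μ₀ := by linarith
  have hB1fin : volume (ball (0 : EuclideanSpace ℝ (Fin (2 * n))) 1) < ⊤ := measure_ball_lt_top
  -- basic volume facts
  have Fpos : ∀ μ x, 0 < μ → μ ≤ μ₀ → x ∈ B08 → 0 < volume (S μ x) := by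
    intro μ x h1 h2 hx
    have hv := (hvol μ x h1 h2 hx).1
    have hball : 0 < volume (ball (0 : EuclideanSpace ℝ (Fin (2 * n))) (Real.sqrt μ)) :=
      measure_ball_pos _ _ (Real.sqrt_pos.2 h1)
    by_contra hzero
    rw [not_lt, nonpos_iff_eq_zero] at hzero
    rw [hzero, mul_zero] at hv
    exact absurd (le_antisymm hv (zero_le)) hball.ne'
  have Ffin : ∀ μ x, 0 < μ → μ ≤ μ₀ → x ∈ B08 → volume (S μ x) < ⊤ :=
    fun μ x h1 h2 hx => lt_of_le_of_lt (measure_mono (hsub μ x h1 h2 hx)) hB1fin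
  have Fne : ∀ μ x, 0 < μ → μ ≤ μ₀ → x ∈ B08 → (S μ x).Nonempty :=
    fun μ x h1 h2 hx => nonempty_of_measure_ne_zero (Fpos μ x h1 h2 hx).ne'
  -- self-engulfing
  have Fself : ∀ μ x, 0 < μ → μ ≤ μ₀ → x ∈ B08 → S μ x ⊆ dilate 10 x (S μ x) := by
    intro μ x h1 h2 hx
    refine heng μ μ x x h1 h2 h1 h2 hx hx ?_ ?_
    · nlinarith [Real.sqrt_nonneg μ]
    · obtain ⟨y, hy⟩ := Fne μ x h1 h2 hx; exact ⟨y, hy, hy⟩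
  have Fshrink1 : ∀ μ x, 0 < μ → μ ≤ μ₀ → x ∈ B08 → dilate (1/10) x (S μ x) ⊆ S μ x := by
    intro μ x h1 h2 hx
    have h2' := subset_of_dilate_subset 10 x _ _ (by norm_num) (Fself μ x h1 h2 hx)
    rwa [show (10:ℝ)⁻¹ = 1/10 by norm_num] at h2'
  have Fshrink : ∀ μ x, 0 < μ → μ ≤ μ₀ → x ∈ B08 → ∀ k : ℕ,
      dilate ((1/10 : ℝ)^k) x (S μ x) ⊆ S μ x := by
    intro μ x h1 h2 hx k
    induction k with
    | zero => rw [pow_zero, dilate_one]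
    | succ k ih =>
        rw [pow_succ, ← dilate_dilate]
        exact (dilate_mono _ _ _ _ (Fshrink1 μ x h1 h2 hx)).trans ih
  have Fball2 : ∀ μ x, 0 < μ → μ ≤ μ₀ → x ∈ B08 → S μ x ⊆ closedBall x 2 := by
    intro μ x h1 h2 hx y hy
    have hy1 : dist y 0 < 1 := mem_ball.mp (hsub μ x h1 h2 hx hy)
    have hx1 : dist x 0 < 0.8 := by
      have := hx; rw [hB08, mem_ball] at this; exact this
    rw [mem_closedBall]
    calc dist y x ≤ dist y 0 + dist 0 x := dist_triangle _ _ _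
      _ ≤ 2 := by rw [dist_comm (0 : EuclideanSpace ℝ (Fin (2 * n))) x]; norm_num at hy1 hx1 ⊢; linarith
  have Fdiam : ∀ μ x, 0 < μ → μ ≤ μ₀ → x ∈ B08 →
      S μ x ⊆ closedBall x (2 * Metric.diam (S μ x)) := by
    intro μ x h1 h2 hx y hy
    have hz : x + (1/10 : ℝ) • (y - x) ∈ S μ x := by
      have h3 := Fshrink μ x h1 h2 hx 1
      rw [pow_one] at h3
      exact h3 ⟨y, hy, rfl⟩
    have hbdd : Bornology.IsBounded (S μ x) := isBounded_ball.subset (hsub μ x h1 h2 hx)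
    have hd := Metric.dist_le_diam_of_mem hbdd hy hz
    have heq : dist y (x + (1/10 : ℝ) • (y - x)) = (9/10 : ℝ) * ‖y - x‖ := by
      rw [dist_eq_norm, show y - (x + (1/10 : ℝ) • (y - x)) = (9/10 : ℝ) • (y - x) by module,
        norm_smul]
      norm_num
    rw [heq] at hd
    rw [mem_closedBall, dist_eq_norm]
    nlinarith [norm_nonneg (y - x)]
  have Fsmall : ∀ x ∈ B08, ∀ ρ : ℝ, 0 < ρ →
      ∃ μ, 0 < μ ∧ μ ≤ μ₀ / 484 ∧ S μ x ⊆ closedBall x ρ := by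
    intro x hx ρ hρ
    obtain ⟨δ, hδ0, hδ⟩ := hdiam (ρ/4) (by linarith)
    have h1 : 0 < min δ (μ₀/484) := lt_min hδ0 (by linarith)
    have h2 : min δ (μ₀/484) ≤ μ₀ := le_trans (min_le_right _ _) h484μ
    refine ⟨min δ (μ₀/484), h1, min_le_right _ _, ?_⟩
    have hdle := hδ _ x h1 (min_le_left _ _) h2 hx
    exact (Fdiam _ x h1 h2 hx).trans (closedBall_subset_closedBall (by linarith))
  -- density of a section at its center
  have Fdens : ∀ μ x, 0 < μ → μ ≤ μ₀ → x ∈ B08 → ∀ r : ℝ, 0 < r → r ≤ 2 →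
      ENNReal.ofReal ((r/20)^(2*n)) * volume (S μ x) ≤ volume (S μ x ∩ closedBall x r) := by
    intro μ x h1 h2 hx r hr1 hr2
    have hex : ∃ k : ℕ, ((1:ℝ)/10)^k ≤ r/2 := by
      obtain ⟨k, hk⟩ := exists_pow_lt_of_lt_one (show (0:ℝ) < r/2 by linarith)
        (by norm_num : (1:ℝ)/10 < 1)
      exact ⟨k, hk.le⟩
    have hk1 : ((1:ℝ)/10)^(Nat.find hex) ≤ r/2 := Nat.find_spec hex
    have hk2 : r/20 ≤ ((1:ℝ)/10)^(Nat.find hex) := by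
      rcases Nat.eq_zero_or_pos (Nat.find hex) with h | h
      · rw [h, pow_zero]; linarith
      · have hmin := Nat.find_min hex (m := Nat.find hex - 1) (by omega)
        push_neg at hmin
        have hkk : Nat.find hex = (Nat.find hex - 1) + 1 := by omega
        rw [hkk, pow_succ]
        nlinarith [hmin]
    have hsub1 : dilate (((1:ℝ)/10)^(Nat.find hex)) x (S μ x) ⊆ S μ x ∩ closedBall x r := by
      intro z hz
      refine ⟨Fshrink μ x h1 h2 hx _ hz, ?_⟩
      have h3 := dilate_subset_closedBall (((1:ℝ)/10)^(Nat.find hex)) x _ (by positivity)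
        (Fball2 μ x h1 h2 hx) hz
      exact closedBall_subset_closedBall (by nlinarith) h3
    calc ENNReal.ofReal ((r/20)^(2*n)) * volume (S μ x)
        ≤ ENNReal.ofReal ((((1:ℝ)/10)^(Nat.find hex))^(2*n)) * volume (S μ x) := by
          exact mul_le_mul_left (ENNReal.ofReal_le_ofReal
            (pow_le_pow_left₀ (by linarith) hk2 _)) _
      _ = volume (dilate (((1:ℝ)/10)^(Nat.find hex)) x (S μ x)) := by
          rw [volume_dilate, abs_of_pos (by positivity)]
      _ ≤ volume (S μ x ∩ closedBall x r) := measure_mono hsub1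
  -- chain and enlargement
  have Fchain : ∀ μ x, 0 < μ → μ ≤ μ₀/121 → x ∈ B08 → S μ x ⊆ S (121*μ) x :=
    fun μ x h1 h2 hx => (Fself μ x h1 (le_trans h2 h121') hx).trans (hnest μ x h1 h2 hx).1
  have Fvol12 : ∀ μ x, 0 < μ → μ ≤ μ₀/121 → x ∈ B08 →
      volume (S (121*μ) x) ≤ ENNReal.ofReal ((12:ℝ)^(2*n)) * volume (S μ x) := by
    intro μ x h1 h2 hx
    calc volume (S (121*μ) x) ≤ volume (dilate 12 x (S μ x)) :=
          measure_mono (hnest μ x h1 h2 hx).2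
      _ = ENNReal.ofReal ((12:ℝ)^(2*n)) * volume (S μ x) := by
          rw [volume_dilate]; norm_num
  have Fengulf : ∀ μ₁ μ₂ x₁ x₂, 0 < μ₁ → μ₁ ≤ μ₀ → 0 < μ₂ → μ₂ ≤ μ₀/121 →
      x₁ ∈ B08 → x₂ ∈ B08 → Real.sqrt μ₁ ≤ 2 * Real.sqrt μ₂ →
      (S μ₁ x₁ ∩ S μ₂ x₂).Nonempty → S μ₁ x₁ ⊆ S (121*μ₂) x₂ :=
    fun μ₁ μ₂ x₁ x₂ h1 h2 h3 h4 hx1 hx2 hs hne =>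
      (heng μ₁ μ₂ x₁ x₂ h1 h2 h3 (le_trans h4 h121') hx1 hx2 hs hne).trans
        (hnest μ₂ x₂ h3 h4 hx2).1
  -- stopping-time lemma
  have Fstop : ∀ x ∈ B08, ∀ μ : ℝ, 0 < μ → μ ≤ μ₀/4 →
      ENNReal.ofReal ebar * volume (S μ x) ≤ volume (S μ x ∩ X) →
      ∃ ν, 0 < ν ∧ ν < μ₀/484 ∧ S μ x ⊆ S ν x ∧
        ENNReal.ofReal ebar * volume (S ν x) ≤ volume (S ν x ∩ X) ∧
        volume (S (121*ν) x ∩ X) < ENNReal.ofReal ebar * volume (S (121*ν) x) := by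
    intro x hx
    suffices H : ∀ k : ℕ, ∀ μ : ℝ, 0 < μ → μ ≤ μ₀/4 →
        ENNReal.ofReal ebar * volume (S μ x) ≤ volume (S μ x ∩ X) → μ₀/4 < 121^k * μ →
        ∃ ν, 0 < ν ∧ ν < μ₀/484 ∧ S μ x ⊆ S ν x ∧
          ENNReal.ofReal ebar * volume (S ν x) ≤ volume (S ν x ∩ X) ∧
          volume (S (121*ν) x ∩ X) < ENNReal.ofReal ebar * volume (S (121*ν) x) by
      intro μ h1 h2 h3
      obtain ⟨k, hk⟩ : ∃ k : ℕ, μ₀/4 < 121^k * μ := by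
        obtain ⟨k, hk⟩ := pow_unbounded_of_one_lt ((μ₀/4)/μ) (by norm_num : (1:ℝ) < 121)
        exact ⟨k, by rwa [div_lt_iff₀ h1] at hk⟩
      exact H k μ h1 h2 h3 hk
    intro k
    induction k with
    | zero => intro μ h1 h2 h3 h4; rw [pow_zero, one_mul] at h4; linarith
    | succ k ih =>
        intro μ h1 h2 h3 h4
        have hlt : μ < μ₀/484 := by
          by_contra hge
          push_neg at hge
          exact absurd h3 (not_le.mpr (ha x hx μ hge h2))
        by_cases hnext : ENNReal.ofReal ebar * volume (S (121*μ) x) ≤ volume (S (121*μ) x ∩ X)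
        · obtain ⟨ν, hν1, hν2, hν3, hν4, hν5⟩ := ih (121*μ) (by linarith) (by linarith) hnext
            (by rw [pow_succ, mul_comm ((121:ℝ)^k) 121, mul_assoc] at h4; linarith)
          exact ⟨ν, hν1, hν2, (Fchain μ x h1 (by linarith) hx).trans hν3, hν4, hν5⟩
        · exact ⟨μ, h1, hlt, subset_rfl, h3, not_le.mp hnext⟩
  -- PART 1 : the family of stopped high-density sections
  set t₁ : Set ((EuclideanSpace ℝ (Fin (2 * n))) × ℝ) :=
    {p | p.1 ∈ B08 ∧ 0 < p.2 ∧ p.2 < μ₀/484 ∧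
      ENNReal.ofReal ebar * volume (S p.2 p.1) ≤ volume (S p.2 p.1 ∩ X) ∧
      volume (S (121*p.2) p.1 ∩ X) < ENNReal.ofReal ebar * volume (S (121*p.2) p.1)} with ht₁
  obtain ⟨u, hut, hud, hucov⟩ := Vitali.exists_disjoint_subfamily_covering_enlargement
    (fun p => S p.2 p.1) t₁ (fun p => Real.sqrt p.2) 2 one_lt_two
    (fun a _ => Real.sqrt_nonneg _) (Real.sqrt (μ₀/484))
    (fun a ha' => Real.sqrt_le_sqrt ha'.2.2.1.le)
    (fun a ha' => Fne _ _ ha'.2.1 (le_trans ha'.2.2.1.le h484μ) ha'.1)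
  have hu_count : u.Countable := by
    have hcnt := Measure.countable_meas_pos_of_disjoint_iUnion₀
      (μ := volume) (As := fun b : ↥u => S b.1.2 b.1.1)
      (fun b => (hmeas _ _).nullMeasurableSet)
      (fun b b' hbb' => ((hud b.2 b'.2 (fun h => hbb' (Subtype.ext h))).aedisjoint))
    have huniv : {i : ↥u | 0 < volume (S i.1.2 i.1.1)} = Set.univ := by
      apply Set.eq_univ_of_forall
      intro b
      have hb := hut b.2
      exact Fpos _ _ hb.2.1 (le_trans hb.2.2.1.le h484μ) hb.1
    rw [huniv, Set.countable_univ_iff] at hcnt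
    exact Set.countable_coe_iff.mpr hcnt
  set U := ⋃ p ∈ t₁, S p.2 p.1 with hU
  have hP1 : volume (X ∩ U) ≤
      ENNReal.ofReal ebar * (ENNReal.ofReal ((12:ℝ)^(2*n)) * volume Y) := by
    have hUsub : X ∩ U ⊆ ⋃ b ∈ u, (S (121*b.2) b.1 ∩ X) := by
      rintro z ⟨hzX, hzU⟩
      rw [hU, Set.mem_iUnion₂] at hzU
      obtain ⟨a, hat, hza⟩ := hzU
      obtain ⟨b, hbu, hint, hle⟩ := hucov a hat
      have hbt := hut hbu
      refine Set.mem_biUnion hbu ⟨?_, hzX⟩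
      exact Fengulf a.2 b.2 a.1 b.1 hat.2.1 (le_trans hat.2.2.1.le h484μ) hbt.2.1
        (le_trans hbt.2.2.1.le h121) hat.1 hbt.1 hle hint hza
    calc volume (X ∩ U) ≤ volume (⋃ b ∈ u, (S (121*b.2) b.1 ∩ X)) := measure_mono hUsub
      _ ≤ ∑' (b : ↥u), volume (S (121*b.1.2) b.1.1 ∩ X) := measure_biUnion_le volume hu_count _
      _ ≤ ∑' (b : ↥u), ENNReal.ofReal ebar *
            (ENNReal.ofReal ((12:ℝ)^(2*n)) * volume (S b.1.2 b.1.1)) := by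
          apply ENNReal.tsum_le_tsum
          intro b
          have hbt := hut b.2
          calc volume (S (121*b.1.2) b.1.1 ∩ X)
              ≤ ENNReal.ofReal ebar * volume (S (121*b.1.2) b.1.1) := hbt.2.2.2.2.le
            _ ≤ _ := mul_le_mul_right
                (Fvol12 b.1.2 b.1.1 hbt.2.1 (le_trans hbt.2.2.1.le h121) hbt.1) _
      _ = ENNReal.ofReal ebar * (ENNReal.ofReal ((12:ℝ)^(2*n)) *
            ∑' (b : ↥u), volume (S b.1.2 b.1.1)) := by
          rw [ENNReal.tsum_mul_left, ENNReal.tsum_mul_left]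
      _ ≤ _ := by
          apply mul_le_mul_right
          apply mul_le_mul_right
          rw [← MeasureTheory.measure_biUnion hu_count hud (fun b _ => hmeas _ _)]
          apply measure_mono
          refine Set.iUnion₂_subset fun a hau => ?_
          have hat := hut hau
          exact hb a.1 hat.1 a.2 hat.2.1 (le_trans hat.2.2.1.le (by linarith)) hat.2.2.2.1
  -- PART 2 : the remainder X \ U is null
  have hWsub : X \ U ⊆ B08 := fun z hz => hXsub hz.1
  have hWfin : volume (X \ U) < ⊤ := by
    refine lt_of_le_of_lt (measure_mono ?_) hB1fin
    exact hWsub.trans (by rw [hB08]; exact ball_subset_ball (by norm_num))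
  have hWd : ∀ x ∈ B08, ∀ μ : ℝ, 0 < μ → μ ≤ μ₀/4 →
      volume (S μ x ∩ (X \ U)) ≤ ENNReal.ofReal ebar * volume (S μ x) := by
    intro x hx μ h1 h2
    by_cases hd : ENNReal.ofReal ebar * volume (S μ x) ≤ volume (S μ x ∩ X)
    · obtain ⟨ν, hν1, hν2, hνsub, hν3, hν4⟩ := Fstop x hx μ h1 h2 hd
      have hSU : S μ x ⊆ U := by
        rw [hU]
        refine hνsub.trans ?_
        exact Set.subset_biUnion_of_mem (u := fun p => S p.2 p.1)
          (show ((x, ν) : (EuclideanSpace ℝ (Fin (2 * n))) × ℝ) ∈ t₁ from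
            ⟨hx, hν1, hν2, hν3, hν4⟩)
      have hempty : S μ x ∩ (X \ U) = ∅ := by
        apply Set.eq_empty_of_forall_notMem
        rintro z ⟨hz1, _, hz3⟩
        exact hz3 (hSU hz1)
      rw [hempty, measure_empty]
      exact zero_le
    · exact le_trans (measure_mono (Set.inter_subset_inter_right _ Set.diff_subset))
        (not_le.mp hd).le
  set η : ℝ := (1 - ebar)/2 with hη
  have hη0 : 0 < η := by rw [hη]; linarith
  have hη1 : η < 1 := by rw [hη]; linarith
  have hηe : ebar < 1 - η := by rw [hη]; linarith
  have hkey : ∀ δ : ℝ, 0 < δ →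
      ENNReal.ofReal (1-η) * volume (X \ U) ≤
        ENNReal.ofReal ebar * volume (X \ U) + 2 * ENNReal.ofReal δ := by
    intro δ hδ
    obtain ⟨O, hWO, hOopen, hOvol⟩ := Set.exists_isOpen_lt_of_lt (X \ U) _
      (ENNReal.lt_add_right hWfin.ne (ENNReal.ofReal_pos.mpr hδ).ne')
    set t₂ : Set ((EuclideanSpace ℝ (Fin (2 * n))) × ℝ × Set (EuclideanSpace ℝ (Fin (2 * n)))) :=
      {q | q.1 ∈ X \ U ∧ 0 < q.2.1 ∧ q.2.1 ≤ μ₀/484 ∧ S q.2.1 q.1 ⊆ O ∧ IsCompact q.2.2 ∧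
        q.2.2 ⊆ S q.2.1 q.1 ∧
        volume (S q.2.1 q.1) ≤ volume q.2.2 + ENNReal.ofReal η * volume (S q.2.1 q.1)} with ht₂
    have hq8 : ∀ q ∈ t₂, q.1 ∈ B08 := fun q hq => hWsub hq.1
    have hcore : ∀ q ∈ t₂, ENNReal.ofReal (1-η) * volume (S q.2.1 q.1) ≤ volume q.2.2 := by
      intro q hq
      have hfin : ENNReal.ofReal η * volume (S q.2.1 q.1) ≠ ⊤ :=
        ENNReal.mul_ne_top ENNReal.ofReal_ne_top
          (Ffin _ _ hq.2.1 (le_trans hq.2.2.1 h484μ) (hq8 q hq)).ne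
      rw [← ENNReal.add_le_add_iff_right hfin]
      calc ENNReal.ofReal (1-η) * volume (S q.2.1 q.1) + ENNReal.ofReal η * volume (S q.2.1 q.1)
          = volume (S q.2.1 q.1) := by
            rw [← add_mul, ← ENNReal.ofReal_add (by linarith) hη0.le]
            norm_num
        _ ≤ volume q.2.2 + ENNReal.ofReal η * volume (S q.2.1 q.1) := hq.2.2.2.2.2.2
    have hKpos : ∀ q ∈ t₂, 0 < volume q.2.2 := by
      intro q hq
      refine lt_of_lt_of_le ?_ (hcore q hq)
      exact ENNReal.mul_pos (ENNReal.ofReal_pos.mpr (by linarith)).ne'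
        (Fpos _ _ hq.2.1 (le_trans hq.2.2.1 h484μ) (hq8 q hq)).ne'
    obtain ⟨u₂, hu₂t, hu₂d, hu₂cov⟩ := Vitali.exists_disjoint_subfamily_covering_enlargement
      (fun q => q.2.2) t₂ (fun q => Real.sqrt q.2.1) 2 one_lt_two
      (fun a _ => Real.sqrt_nonneg _) (Real.sqrt (μ₀/484))
      (fun a ha' => Real.sqrt_le_sqrt ha'.2.2.1)
      (fun a ha' => nonempty_of_measure_ne_zero (hKpos a ha').ne')
    have hbprop : ∀ b : ↥u₂, b.1 ∈ t₂ := fun b => hu₂t b.2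
    have hu₂count : u₂.Countable := by
      have hcnt := Measure.countable_meas_pos_of_disjoint_iUnion₀
        (μ := volume) (As := fun b : ↥u₂ => b.1.2.2)
        (fun b => ((hbprop b).2.2.2.2.1).measurableSet.nullMeasurableSet)
        (fun b b' hbb' => ((hu₂d b.2 b'.2 (fun h => hbb' (Subtype.ext h))).aedisjoint))
      have huniv : {i : ↥u₂ | 0 < volume i.1.2.2} = Set.univ :=
        Set.eq_univ_of_forall (fun b => hKpos b.1 (hbprop b))
      rw [huniv, Set.countable_univ_iff] at hcnt
      exact Set.countable_coe_iff.mpr hcnt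
    haveI : Countable ↥u₂ := hu₂count.to_subtype
    have hsumK : ∑' (b : ↥u₂), volume b.1.2.2 ≤ volume O := by
      rw [← MeasureTheory.measure_biUnion hu₂count hu₂d
        (fun b hb' => ((hu₂t hb').2.2.2.2.1).measurableSet)]
      apply measure_mono
      refine Set.iUnion₂_subset fun b hb' => ?_
      exact ((hu₂t hb').2.2.2.2.2.1).trans (hu₂t hb').2.2.2.1
    have hOfin : volume O < ⊤ :=
      hOvol.trans (ENNReal.add_lt_top.mpr ⟨hWfin, ENNReal.ofReal_lt_top⟩)
    have hsumS : ENNReal.ofReal (1-η) * ∑' (b : ↥u₂), volume (S b.1.2.1 b.1.1) ≤ volume O := by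
      rw [← ENNReal.tsum_mul_left]
      exact le_trans (ENNReal.tsum_le_tsum (fun b => hcore b.1 (hbprop b))) hsumK
    have hsumSfin : ∑' (b : ↥u₂), volume (S b.1.2.1 b.1.1) ≠ ⊤ := by
      intro htop
      rw [htop, ENNReal.mul_top (by simp [ENNReal.ofReal_eq_zero]; linarith)] at hsumS
      exact absurd (top_le_iff.mp hsumS) hOfin.ne
    have hgfin : ∑' (b : ↥u₂), volume (S (121*b.1.2.1) b.1.1) ≠ ⊤ := by
      have hle : ∑' (b : ↥u₂), volume (S (121*b.1.2.1) b.1.1) ≤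
          ENNReal.ofReal ((12:ℝ)^(2*n)) * ∑' (b : ↥u₂), volume (S b.1.2.1 b.1.1) := by
        rw [← ENNReal.tsum_mul_left]
        apply ENNReal.tsum_le_tsum
        intro b
        exact Fvol12 b.1.2.1 b.1.1 (hbprop b).2.1 (le_trans (hbprop b).2.2.1 h121)
          (hq8 _ (hbprop b))
      exact ne_top_of_le_ne_top (ENNReal.mul_ne_top ENNReal.ofReal_ne_top hsumSfin) hle
    obtain ⟨v, hv⟩ : ∃ v : Finset ↥u₂,
        ∑' (b : {x : ↥u₂ // x ∉ v}), volume (S (121*b.1.1.2.1) b.1.1.1) ≤ ENNReal.ofReal δ := by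
      have hten := ENNReal.tendsto_tsum_compl_atTop_zero hgfin
      have hev := hten.eventually_lt_const (ENNReal.ofReal_pos.mpr hδ)
      obtain ⟨v, hv'⟩ := hev.exists
      exact ⟨v, hv'.le⟩
    set NB : ↥u₂ → Set (EuclideanSpace ℝ (Fin (2 * n))) := fun b =>
      {y | ¬ Tendsto (fun r => volume (S (121*b.1.2.1) b.1.1 ∩ closedBall y r) /
        volume (closedBall y r)) (𝓝[>] 0)
        (𝓝 ((S (121*b.1.2.1) b.1.1).indicator 1 y))} with hNB
    have hNB0 : ∀ b : ↥u₂, volume (NB b) = 0 := by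
      intro b
      have hae := Besicovitch.ae_tendsto_measure_inter_div_of_measurableSet volume
        (hmeas (121*b.1.2.1) b.1.1)
      exact hae
    -- coverage claim
    have hcov : X \ U ⊆ (⋃ b ∈ v, (b : ↥u₂).1.2.2) ∪
        (⋃ (b : {x : ↥u₂ // x ∉ v}), (S (121*b.1.1.2.1) b.1.1.1 ∪ NB b.1)) := by
      intro w hw
      by_cases hwv : w ∈ ⋃ b ∈ v, (b : ↥u₂).1.2.2
      · exact Or.inl hwv
      right
      have hFclosed : IsClosed (⋃ b ∈ v, (b : ↥u₂).1.2.2) := by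
        apply Set.Finite.isClosed_biUnion v.finite_toSet
        exact fun b _ => ((hbprop b).2.2.2.2.1).isClosed
      have hwO : w ∈ O := hWO hw
      obtain ⟨ρ₁, hρ₁, hball₁⟩ := Metric.isOpen_iff.mp hOopen w hwO
      obtain ⟨ρ₂, hρ₂, hball₂⟩ := Metric.isOpen_iff.mp hFclosed.isOpen_compl w hwv
      have hminpos : 0 < min ρ₁ ρ₂ := lt_min hρ₁ hρ₂
      obtain ⟨μ, hμ0, hμ484, hμball⟩ := Fsmall w (hWsub hw) (min ρ₁ ρ₂ / 2) (by linarith)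
      have hμμ₀ : μ ≤ μ₀ := le_trans hμ484 h484μ
      have hcb : closedBall w (min ρ₁ ρ₂ / 2) ⊆ ball w (min ρ₁ ρ₂) :=
        closedBall_subset_ball (by linarith)
      have hSO : S μ w ⊆ O :=
        hμball.trans (hcb.trans ((ball_subset_ball (min_le_left _ _)).trans hball₁))
      have hSF : Disjoint (S μ w) (⋃ b ∈ v, (b : ↥u₂).1.2.2) := by
        rw [Set.disjoint_left]
        intro z hz hzF
        exact (hball₂ ((ball_subset_ball (min_le_right _ _)) (hcb (hμball hz)))) hzF
      obtain ⟨K, hKS, hKc, hKlt⟩ := (hmeas μ w).exists_isCompact_lt_add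
        (Ffin μ w hμ0 hμμ₀ (hWsub hw)).ne
        (mul_ne_zero (ENNReal.ofReal_pos.mpr hη0).ne' (Fpos μ w hμ0 hμμ₀ (hWsub hw)).ne')
      have hqt : ((w, μ, K) : (EuclideanSpace ℝ (Fin (2 * n))) × ℝ ×
          Set (EuclideanSpace ℝ (Fin (2 * n)))) ∈ t₂ :=
        ⟨hw, hμ0, hμ484, hSO, hKc, hKS, hKlt.le⟩
      obtain ⟨b, hbu, hKint, hδle⟩ := hu₂cov (w, μ, K) hqt
      have hbt := hu₂t hbu
      have hbnv : (⟨b, hbu⟩ : ↥u₂) ∉ v := by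
        intro hbv
        obtain ⟨z, hz1, hz2⟩ := hKint
        have hzS : z ∈ S μ w := hKS hz1
        have hzF : z ∈ ⋃ b' ∈ v, (b' : ↥u₂).1.2.2 :=
          Set.mem_biUnion hbv (show z ∈ ((⟨b, hbu⟩ : ↥u₂) : ↥u₂).1.2.2 from hz2)
        exact Set.disjoint_left.mp hSF hzS hzF
      have hsecint : (S μ w ∩ S b.2.1 b.1).Nonempty :=
        hKint.mono (Set.inter_subset_inter hKS hbt.2.2.2.2.2.1)
      have hengb : S μ w ⊆ S (121*b.2.1) b.1 :=
        Fengulf μ b.2.1 w b.1 hμ0 hμμ₀ hbt.2.1 (le_trans hbt.2.2.1 h121) (hWsub hw)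
          (hWsub hbt.1) hδle hsecint
      refine Set.mem_iUnion.mpr ⟨⟨⟨b, hbu⟩, hbnv⟩, ?_⟩
      by_cases hN : w ∈ NB ⟨b, hbu⟩
      · exact Or.inr hN
      left
      have hT : Tendsto (fun r => volume (S (121*b.2.1) b.1 ∩ closedBall w r) /
          volume (closedBall w r)) (𝓝[>] 0)
          (𝓝 ((S (121*b.2.1) b.1).indicator 1 w)) := not_not.mp hN
      by_contra hwE
      rw [Set.indicator_of_notMem hwE] at hT
      have hball0 : 0 < volume (ball (0 : EuclideanSpace ℝ (Fin (2 * n))) 1) :=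
        measure_ball_pos _ _ one_pos
      set c : ℝ≥0∞ := ENNReal.ofReal ((1/20:ℝ)^(2*n)) * volume (S μ w) /
        volume (ball (0 : EuclideanSpace ℝ (Fin (2 * n))) 1) with hc
      have hc0 : 0 < c := by
        rw [hc]
        apply ENNReal.div_pos
        · exact (ENNReal.mul_pos (ENNReal.ofReal_pos.mpr (by positivity)).ne'
            (Fpos μ w hμ0 hμμ₀ (hWsub hw)).ne').ne'
        · exact hB1fin.ne
      have hlow : ∀ r : ℝ, 0 < r → r ≤ 2 →
          c ≤ volume (S (121*b.2.1) b.1 ∩ closedBall w r) / volume (closedBall w r) := by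
        intro r h1 h2
        rw [ENNReal.le_div_iff_mul_le (Or.inl (measure_closedBall_pos volume w h1).ne')
          (Or.inl measure_closedBall_lt_top.ne)]
        have hcbvol : volume (closedBall w r) = ENNReal.ofReal (r^(2*n)) *
            volume (ball (0 : EuclideanSpace ℝ (Fin (2 * n))) 1) := by
          rw [Measure.addHaar_closedBall volume w h1.le, h2n]
        have hdm : ENNReal.ofReal ((1/20:ℝ)^(2*n)) * volume (S μ w) /
            volume (ball (0 : EuclideanSpace ℝ (Fin (2 * n))) 1) *
            volume (ball (0 : EuclideanSpace ℝ (Fin (2 * n))) 1) =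
            ENNReal.ofReal ((1/20:ℝ)^(2*n)) * volume (S μ w) :=
          ENNReal.div_mul_cancel hball0.ne' hB1fin.ne
        calc c * volume (closedBall w r)
            = (c * volume (ball (0 : EuclideanSpace ℝ (Fin (2 * n))) 1)) *
              ENNReal.ofReal (r^(2*n)) := by rw [hcbvol]; ring
          _ = ENNReal.ofReal ((1/20:ℝ)^(2*n)) * volume (S μ w) * ENNReal.ofReal (r^(2*n)) := by
              rw [hc, hdm]
          _ = ENNReal.ofReal ((r/20:ℝ)^(2*n)) * volume (S μ w) := by
              rw [mul_right_comm, ← ENNReal.ofReal_mul (by positivity)]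
              congr 2
              rw [← mul_pow, one_div_mul_eq_div]
          _ ≤ volume (S μ w ∩ closedBall w r) := Fdens μ w hμ0 hμμ₀ (hWsub hw) r h1 h2
          _ ≤ volume (S (121*b.2.1) b.1 ∩ closedBall w r) :=
              measure_mono (Set.inter_subset_inter_left _ hengb)
      have hev1 := hT.eventually_lt_const hc0
      have hev2 : ∀ᶠ r in 𝓝[>] (0:ℝ), r ∈ Set.Ioc (0:ℝ) 2 :=
        Ioc_mem_nhdsGT_of_mem ⟨le_refl 0, two_pos⟩
      obtain ⟨r, hr1, hr2⟩ := (hev1.and hev2).exists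
      exact absurd (hlow r hr2.1 hr2.2) (not_le.mpr hr1)
    -- the measure estimate
    have hms : volume (X \ U) ≤
        (∑ b ∈ v, volume (S (b : ↥u₂).1.2.1 (b : ↥u₂).1.1 ∩ (X \ U))) + ENNReal.ofReal δ := by
      have hsplit : X \ U ⊆ (⋃ b ∈ v, ((b : ↥u₂).1.2.2 ∩ (X \ U))) ∪
          (⋃ (b : {x : ↥u₂ // x ∉ v}), (S (121*b.1.1.2.1) b.1.1.1 ∪ NB b.1)) := by
        intro z hz
        rcases hcov hz with h | h
        · left
          rw [Set.mem_iUnion₂] at h ⊢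
          obtain ⟨b', hb', hzb⟩ := h
          exact ⟨b', hb', hzb, hz⟩
        · exact Or.inr h
      calc volume (X \ U)
          ≤ volume (⋃ b ∈ v, ((b : ↥u₂).1.2.2 ∩ (X \ U))) +
            volume (⋃ (b : {x : ↥u₂ // x ∉ v}), (S (121*b.1.1.2.1) b.1.1.1 ∪ NB b.1)) :=
            le_trans (measure_mono hsplit) (measure_union_le _ _)
        _ ≤ (∑ b ∈ v, volume ((b : ↥u₂).1.2.2 ∩ (X \ U))) + ENNReal.ofReal δ := by
            apply add_le_add (measure_biUnion_finset_le _ _)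
            calc volume (⋃ (b : {x : ↥u₂ // x ∉ v}), (S (121*b.1.1.2.1) b.1.1.1 ∪ NB b.1))
                ≤ ∑' (b : {x : ↥u₂ // x ∉ v}), volume (S (121*b.1.1.2.1) b.1.1.1 ∪ NB b.1) :=
                  measure_iUnion_le _
              _ ≤ ∑' (b : {x : ↥u₂ // x ∉ v}), volume (S (121*b.1.1.2.1) b.1.1.1) := by
                  apply ENNReal.tsum_le_tsum
                  intro b
                  calc volume (S (121*b.1.1.2.1) b.1.1.1 ∪ NB b.1)
                      ≤ volume (S (121*b.1.1.2.1) b.1.1.1) + volume (NB b.1) :=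
                        measure_union_le _ _
                    _ = volume (S (121*b.1.1.2.1) b.1.1.1) := by rw [hNB0 b.1, add_zero]
              _ ≤ ENNReal.ofReal δ := hv
        _ ≤ (∑ b ∈ v, volume (S (b : ↥u₂).1.2.1 (b : ↥u₂).1.1 ∩ (X \ U))) +
            ENNReal.ofReal δ := by
            apply add_le_add_left
            apply Finset.sum_le_sum
            intro b _
            exact measure_mono (Set.inter_subset_inter_left _ (hbprop b).2.2.2.2.2.1)
    have hA : (∑ b ∈ v, volume (S (b : ↥u₂).1.2.1 (b : ↥u₂).1.1 ∩ (X \ U))) ≤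
        ENNReal.ofReal ebar * ∑ b ∈ v, volume (S (b : ↥u₂).1.2.1 (b : ↥u₂).1.1) := by
      rw [Finset.mul_sum]
      apply Finset.sum_le_sum
      intro b _
      exact hWd b.1.1 (hq8 _ (hbprop b)) b.1.2.1 (hbprop b).2.1
        (le_trans (hbprop b).2.2.1 (by linarith))
    have hBB : ENNReal.ofReal (1-η) * ∑ b ∈ v, volume (S (b : ↥u₂).1.2.1 (b : ↥u₂).1.1) ≤
        volume (X \ U) + ENNReal.ofReal δ := by
      calc ENNReal.ofReal (1-η) * ∑ b ∈ v, volume (S (b : ↥u₂).1.2.1 (b : ↥u₂).1.1)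
          = ∑ b ∈ v, ENNReal.ofReal (1-η) * volume (S (b : ↥u₂).1.2.1 (b : ↥u₂).1.1) :=
            Finset.mul_sum _ _ _
        _ ≤ ∑ b ∈ v, volume (b : ↥u₂).1.2.2 :=
            Finset.sum_le_sum (fun b _ => hcore b.1 (hbprop b))
        _ ≤ ∑' (b : ↥u₂), volume b.1.2.2 := ENNReal.sum_le_tsum v
        _ ≤ volume O := hsumK
        _ ≤ volume (X \ U) + ENNReal.ofReal δ := hOvol.le
    calc ENNReal.ofReal (1-η) * volume (X \ U)
        ≤ ENNReal.ofReal (1-η) *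
          ((∑ b ∈ v, volume (S (b : ↥u₂).1.2.1 (b : ↥u₂).1.1 ∩ (X \ U))) +
            ENNReal.ofReal δ) := mul_le_mul_right hms _
      _ ≤ ENNReal.ofReal (1-η) *
          (ENNReal.ofReal ebar * (∑ b ∈ v, volume (S (b : ↥u₂).1.2.1 (b : ↥u₂).1.1)) +
            ENNReal.ofReal δ) := mul_le_mul_right (add_le_add_left hA _) _
      _ = ENNReal.ofReal ebar *
          (ENNReal.ofReal (1-η) * ∑ b ∈ v, volume (S (b : ↥u₂).1.2.1 (b : ↥u₂).1.1)) +
          ENNReal.ofReal (1-η) * ENNReal.ofReal δ := by ring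
      _ ≤ ENNReal.ofReal ebar * (volume (X \ U) + ENNReal.ofReal δ) +
          1 * ENNReal.ofReal δ := by
          apply add_le_add (mul_le_mul_right hBB _)
          exact mul_le_mul_left (ENNReal.ofReal_le_one.mpr (by linarith)) _
      _ = ENNReal.ofReal ebar * volume (X \ U) +
          (ENNReal.ofReal ebar * ENNReal.ofReal δ + ENNReal.ofReal δ) := by ring
      _ ≤ ENNReal.ofReal ebar * volume (X \ U) + 2 * ENNReal.ofReal δ := by
          apply add_le_add_right
          calc ENNReal.ofReal ebar * ENNReal.ofReal δ + ENNReal.ofReal δ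
              ≤ 1 * ENNReal.ofReal δ + ENNReal.ofReal δ :=
                add_le_add_left (mul_le_mul_left
                  (ENNReal.ofReal_le_one.mpr hebar1.le) _) _
            _ = 2 * ENNReal.ofReal δ := by ring
  -- conclude vol (X \ U) = 0
  have hW0 : volume (X \ U) = 0 := by
    have hle : ENNReal.ofReal (1-η) * volume (X \ U) ≤
        ENNReal.ofReal ebar * volume (X \ U) := by
      apply ENNReal.le_of_forall_pos_le_add
      intro ε hε _
      have hkey' := hkey ((ε : ℝ)/2) (by positivity)
      have h2e : 2 * ENNReal.ofReal ((ε : ℝ)/2) = (ε : ℝ≥0∞) := by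
        rw [two_mul, ← ENNReal.ofReal_add (by positivity) (by positivity),
          ← ENNReal.ofReal_coe_nnreal]
        norm_num
      rw [h2e] at hkey'
      exact hkey'
    by_contra h0
    have hvne : volume (X \ U) ≠ 0 := h0
    have hcontra : ENNReal.ofReal (1-η) ≤ ENNReal.ofReal ebar :=
      (ENNReal.mul_le_mul_iff_left hvne hWfin.ne).mp hle
    rw [ENNReal.ofReal_le_ofReal_iff hebar.le] at hcontra
    linarith
  -- combine
  have hXle := measure_le_inter_add_diff volume X U
  rw [hW0, add_zero] at hXle
  refine le_trans hXle (le_trans hP1 (le_of_eq ?_))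
  rw [ENNReal.ofReal_mul (by positivity : (0:ℝ) ≤ (12:ℝ)^(2*n))]
  ring
end

section
/- Let U ⊂ C^n be open with 0 ∈ U, let u : U → R, and let h : U → R be pluriharmonic with h(0) = 0. Let 0 < γ < 1 and μ > 0, and let E_μ(0) = {z : Σ_{i,j} a_{i\bar{j}} z_i \bar{z}_j ≤ μ} with (a_{i\bar{j}}) positive Hermitian. Assume B_{(1−γ)√μ}(0) ⊂ {u ≤ u(0) + μ} ⊂ B_{(1+γ)√μ}(0) ⊂ U and (1−γ)E_μ(0) ⊂ {u ≤ h + u(0) + μ} ⊂ (1+γ)E_μ(0) ⊂ U. Then B_{(1−γ)√μ}(0) ⊂ (1+γ)E_μ(0) and (1−γ)E_μ(0) ⊂ B_{(1+γ)√μ}(0). -/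
open Metric Complex MeasureTheory
open scoped ComplexOrder

noncomputable section

/-- `ℂⁿ` with the Euclidean norm. -/
abbrev CE (n : ℕ) := EuclideanSpace ℂ (Fin n)

/-- Wirtinger derivative `∂f/∂z_i = ½(∂_{x_i} − i ∂_{y_i}) f`. -/
def wD {n : ℕ} (f : CE n → ℂ) (i : Fin n) (z : CE n) : ℂ :=
  (1 / 2) * (fderiv ℝ f z (EuclideanSpace.single i 1)
    - Complex.I * fderiv ℝ f z (EuclideanSpace.single i Complex.I))

/-- Conjugate Wirtinger derivative `∂f/∂z̄_i = ½(∂_{x_i} + i ∂_{y_i}) f`. -/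
def wDbar {n : ℕ} (f : CE n → ℂ) (i : Fin n) (z : CE n) : ℂ :=
  (1 / 2) * (fderiv ℝ f z (EuclideanSpace.single i 1)
    + Complex.I * fderiv ℝ f z (EuclideanSpace.single i Complex.I))

/-- Mixed complex second derivative `u_{i j̄} = ∂²u/∂z_i ∂z̄_j`. -/
def chess {n : ℕ} (u : CE n → ℝ) (i j : Fin n) (z : CE n) : ℂ :=
  wDbar (fun w => wD (fun w' => ((u w' : ℝ) : ℂ)) i w) j z

/-- The complex Hessian matrix `(u_{i j̄})` of `u` at `z`. -/
def hessM {n : ℕ} (u : CE n → ℝ) (z : CE n) : Matrix (Fin n) (Fin n) ℂ :=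
  Matrix.of fun i j => chess u i j z

/-- The Hermitian quadratic form `Σ_{i,j} a_{i j̄} w_i \bar{w}_j` of a matrix. -/
def qform {n : ℕ} (A : Matrix (Fin n) (Fin n) ℂ) (w : Fin n → ℂ) : ℝ :=
  (dotProduct (star w) (A.mulVec w)).re

/-- `h` is pluriharmonic on `U`: it is `C²` there and all mixed complex second
derivatives `h_{i j̄}` vanish on `U`. -/
def PluriharmonicOn {n : ℕ} (h : CE n → ℝ) (U : Set (CE n)) : Prop :=
  ContDiffOn ℝ 2 h U ∧ ∀ z ∈ U, ∀ i j, chess h i j z = 0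

/-- `u` is plurisubharmonic (in the `C²` sense) on `U`: its complex Hessian is
positive semidefinite at every point of `U`. -/
def PshOn {n : ℕ} (u : CE n → ℝ) (U : Set (CE n)) : Prop :=
  ∀ z ∈ U, (hessM u z).PosSemidef


section core
variable {n : ℕ}

lemma deriv_pack {h : CE n → ℝ} {U : Set (CE n)} (hU : IsOpen U)
    (hC : ContDiffOn ℝ 2 h U) :
    (∀ z ∈ U, HasFDerivAt h (fderiv ℝ h z) z) ∧
    (∀ z ∈ U, HasFDerivAt (fderiv ℝ h) (fderiv ℝ (fderiv ℝ h) z) z) ∧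
    ContinuousOn (fderiv ℝ h) U := by
  have h2 : ContDiffOn ℝ (1+1) h U := by norm_num at hC ⊢; exact hC
  rw [contDiffOn_succ_iff_fderiv_of_isOpen hU] at h2
  refine ⟨fun z hz => ?_, fun z hz => ?_, h2.2.2.continuousOn⟩
  · exact (h2.1.differentiableAt (hU.mem_nhds hz)).hasFDerivAt
  · exact ((h2.2.2.differentiableOn one_ne_zero).differentiableAt (hU.mem_nhds hz)).hasFDerivAt

end core
section core2
variable {n : ℕ}

lemma chess_eq_real {h : CE n → ℝ} {U : Set (CE n)} (hU : IsOpen U)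
    (hC : ContDiffOn ℝ 2 h U) {z : CE n} (hz : z ∈ U) (i j : Fin n) :
    chess h i j z =
      (4:ℂ)⁻¹ * ((((fderiv ℝ (fderiv ℝ h) z (EuclideanSpace.single j 1) (EuclideanSpace.single i 1)
        + fderiv ℝ (fderiv ℝ h) z (EuclideanSpace.single j Complex.I) (EuclideanSpace.single i Complex.I) : ℝ)) : ℂ)
        + Complex.I * (((fderiv ℝ (fderiv ℝ h) z (EuclideanSpace.single j Complex.I) (EuclideanSpace.single i 1)
        - fderiv ℝ (fderiv ℝ h) z (EuclideanSpace.single j 1) (EuclideanSpace.single i Complex.I) : ℝ)) : ℂ)) := by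
  obtain ⟨hd1, hd2, hc1⟩ := deriv_pack hU hC
  set D1 := fderiv ℝ h with hD1
  set D2 := fderiv ℝ D1 with hD2
  set ψ : CE n → ℂ := fun w => (2:ℂ)⁻¹ * (((D1 w (EuclideanSpace.single i 1) : ℝ) : ℂ)
      - Complex.I * ((D1 w (EuclideanSpace.single i Complex.I) : ℝ) : ℂ)) with hψdef
  have hev : (fun w => wD (fun w' => ((h w' : ℝ) : ℂ)) i w) =ᶠ[nhds z] ψ := by
    filter_upwards [hU.mem_nhds hz] with w hw
    have hfd : fderiv ℝ (fun w' => ((h w' : ℝ) : ℂ)) w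
        = Complex.ofRealCLM.comp (D1 w) :=
      (Complex.ofRealCLM.hasFDerivAt.comp w (hd1 w hw)).fderiv
    simp only [wD, hfd, ContinuousLinearMap.coe_comp', Function.comp_apply,
      Complex.ofRealCLM_apply, hψdef]
    ring
  have hA := (ContinuousLinearMap.apply ℝ ℝ (EuclideanSpace.single i (1:ℂ))).hasFDerivAt.comp z (hd2 z hz)
  have hB := (ContinuousLinearMap.apply ℝ ℝ (EuclideanSpace.single i Complex.I)).hasFDerivAt.comp z (hd2 z hz)
  have hψ : HasFDerivAt ψ
      ((2:ℂ)⁻¹ • ((Complex.ofRealCLM.comp ((ContinuousLinearMap.apply ℝ ℝ (EuclideanSpace.single i (1:ℂ))).comp (D2 z)))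
        - Complex.I • (Complex.ofRealCLM.comp ((ContinuousLinearMap.apply ℝ ℝ (EuclideanSpace.single i Complex.I)).comp (D2 z))))) z := by
    exact ((Complex.ofRealCLM.hasFDerivAt.comp z hA).sub
      ((Complex.ofRealCLM.hasFDerivAt.comp z hB).const_mul Complex.I)).const_mul ((2:ℂ)⁻¹)
  have hfd2 : fderiv ℝ (fun w => wD (fun w' => ((h w' : ℝ) : ℂ)) i w) z
      = _ := hev.fderiv_eq.trans hψ.fderiv
  simp only [chess, wDbar, hfd2]
  simp only [ContinuousLinearMap.smul_apply, ContinuousLinearMap.sub_apply,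
    ContinuousLinearMap.coe_comp', Function.comp_apply, Complex.ofRealCLM_apply,
    ContinuousLinearMap.apply_apply, smul_eq_mul]
  push_cast
  ring_nf
  rw [Complex.I_sq]
  ring
end core2
section core3
variable {n : ℕ}

lemma smul_single' (c a : ℂ) (i : Fin n) :
    c • (EuclideanSpace.single i a : CE n) = EuclideanSpace.single i (c * a) := by
  ext j
  simp [EuclideanSpace.single_apply, mul_ite]

lemma coe_smul'' (r : ℝ) (y : CE n) : ((r : ℂ)) • y = r • y := by
  rw [show ((r:ℂ)) = r • (1:ℂ) by simp [Complex.real_smul], smul_assoc, one_smul]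

lemma csmul_decomp (c : ℂ) (x : CE n) : c • x = c.re • x + c.im • (Complex.I • x) := by
  calc c • x = ((c.re : ℂ) + (c.im : ℂ) * Complex.I) • x := by rw [Complex.re_add_im]
    _ = ((c.re:ℂ)) • x + ((c.im:ℂ)) • (Complex.I • x) := by rw [add_smul, mul_smul]
    _ = c.re • x + c.im • (Complex.I • x) := by rw [coe_smul'', coe_smul'']

lemma sum_single_decomp (w : CE n) : w = ∑ i, w i • (EuclideanSpace.single i (1:ℂ) : CE n) := by
  have := (EuclideanSpace.basisFun (Fin n) ℂ).sum_repr w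
  simp only [EuclideanSpace.basisFun_repr, EuclideanSpace.basisFun_apply] at this
  exact this.symm

lemma bilin_lap (B : CE n →L[ℝ] CE n →L[ℝ] ℝ)
    (hP : ∀ i j, B (EuclideanSpace.single i 1) (EuclideanSpace.single j 1)
      + B (EuclideanSpace.single i Complex.I) (EuclideanSpace.single j Complex.I) = 0)
    (hQ : ∀ i j, B (EuclideanSpace.single i Complex.I) (EuclideanSpace.single j 1)
      - B (EuclideanSpace.single i 1) (EuclideanSpace.single j Complex.I) = 0)
    (w : CE n) :
    B w w + B (Complex.I • w) (Complex.I • w) = 0 := by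
  have e1 : ∀ (c : ℂ) (i : Fin n), c • (EuclideanSpace.single i (1:ℂ) : CE n)
      = c.re • EuclideanSpace.single i (1:ℂ) + c.im • EuclideanSpace.single i Complex.I := by
    intro c i
    rw [csmul_decomp, smul_single', mul_one]
  have e2 : ∀ (c : ℂ) (i : Fin n), Complex.I • (c • (EuclideanSpace.single i (1:ℂ) : CE n))
      = (-c.im) • EuclideanSpace.single i (1:ℂ) + c.re • EuclideanSpace.single i Complex.I := by
    intro c i
    rw [smul_single', mul_one, smul_single',
      show Complex.I * c = Complex.mk (-c.im) c.re by
        apply Complex.ext <;> simp [mul_comm]]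
    have := e1 (Complex.mk (-c.im) c.re) i
    rw [smul_single', mul_one] at this
    simpa using this
  have single_case : ∀ (a b : ℂ) (i j : Fin n),
      B (a • EuclideanSpace.single i 1) (b • EuclideanSpace.single j 1)
      + B (Complex.I • (a • EuclideanSpace.single i 1)) (Complex.I • (b • EuclideanSpace.single j 1)) = 0 := by
    intro a b i j
    rw [e2 a, e2 b, e1 a, e1 b]
    simp only [map_add, _root_.map_smul, ContinuousLinearMap.add_apply,
      ContinuousLinearMap.smul_apply, ContinuousLinearMap.coe_smul', Pi.smul_apply, smul_eq_mul]
    linear_combination (a.re * b.re + a.im * b.im) * hP i j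
      + (a.im * b.re) * hQ i j - (a.re * b.im) * hQ i j
  have key : ∀ v : Fin n → CE n, (∀ i j, B (v i) (v j) + B (Complex.I • v i) (Complex.I • v j) = 0) →
      B (∑ i, v i) (∑ i, v i) + B (Complex.I • ∑ i, v i) (Complex.I • ∑ i, v i) = 0 := by
    intro v hv
    rw [Finset.smul_sum]
    simp only [map_sum, ContinuousLinearMap.sum_apply]
    rw [← Finset.sum_add_distrib]
    refine Finset.sum_eq_zero fun i _ => ?_
    rw [← Finset.sum_add_distrib]
    exact Finset.sum_eq_zero fun j _ => hv j i
  have hw := sum_single_decomp w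
  have := key (fun i => w i • EuclideanSpace.single i 1)
    (fun i j => single_case (w i) (w j) i j)
  rwa [← hw] at this

end core3
section core4
variable {n : ℕ}

lemma clm_ext_RC {f g : ℂ →L[ℝ] ℂ} (h1 : f 1 = g 1) (hI : f Complex.I = g Complex.I) : f = g := by
  ext v
  rw [show v = v.re • (1:ℂ) + v.im • Complex.I by
    simp [Complex.real_smul, Complex.re_add_im], map_add, map_add,
    _root_.map_smul, _root_.map_smul, _root_.map_smul, _root_.map_smul, h1, hI]

lemma g_holo {h : CE n → ℝ} {U : Set (CE n)} (hU : IsOpen U)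
    (hph : PluriharmonicOn h U) (z₀ : CE n) {l : ℂ} (hl : l • z₀ ∈ U) :
    DifferentiableAt ℂ (fun l' : ℂ => ((fderiv ℝ h (l' • z₀) z₀ : ℝ) : ℂ)
      - Complex.I * ((fderiv ℝ h (l' • z₀) (Complex.I • z₀) : ℝ) : ℂ)) l := by
  obtain ⟨hd1, hd2, hc1⟩ := deriv_pack hU hph.1
  set D1 := fderiv ℝ h with hD1
  set D2 := fderiv ℝ D1 with hD2
  set z := l • z₀ with hzdef
  -- chess vanishing in real terms
  have hPQ : ∀ i j, (D2 z (EuclideanSpace.single j 1) (EuclideanSpace.single i 1)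
        + D2 z (EuclideanSpace.single j Complex.I) (EuclideanSpace.single i Complex.I) = 0)
      ∧ (D2 z (EuclideanSpace.single j Complex.I) (EuclideanSpace.single i 1)
        - D2 z (EuclideanSpace.single j 1) (EuclideanSpace.single i Complex.I) = 0) := by
    intro i j
    have hc := hph.2 z hl i j
    rw [chess_eq_real hU hph.1 hl i j] at hc
    have h4 : (4:ℂ)⁻¹ ≠ 0 := by norm_num
    rw [mul_eq_zero] at hc
    rcases hc with hc | hc
    · exact absurd hc h4
    · rw [Complex.ext_iff] at hc
      simp at hc
      exact hc
  have lap : ∀ w : CE n, D2 z w w + D2 z (Complex.I • w) (Complex.I • w) = 0 := by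
    refine bilin_lap (D2 z) (fun i j => (hPQ j i).1) (fun i j => (hPQ j i).2)
  have symm : ∀ v w, D2 z v w = D2 z w v := by
    intro v w
    refine second_derivative_symmetric_of_eventually_of_real (f := h) ?_ (hd2 z hl) v w
    filter_upwards [hU.mem_nhds hl] with y hy using hd1 y hy
  -- real derivative of g
  set L : ℂ →L[ℝ] CE n := ((ContinuousLinearMap.id ℂ ℂ).smulRight z₀).restrictScalars ℝ with hLdef
  have hL : HasFDerivAt (fun l' : ℂ => l' • z₀) L l := L.hasFDerivAt
  have hd1comp : HasFDerivAt (fun l' : ℂ => D1 (l' • z₀)) ((D2 z).comp L) l :=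
    (hd2 z hl).comp l hL
  have hA := (ContinuousLinearMap.apply ℝ ℝ z₀).hasFDerivAt.comp l hd1comp
  have hB := (ContinuousLinearMap.apply ℝ ℝ (Complex.I • z₀)).hasFDerivAt.comp l hd1comp
  have hg : HasFDerivAt (fun l' : ℂ => ((D1 (l' • z₀) z₀ : ℝ) : ℂ)
      - Complex.I * ((D1 (l' • z₀) (Complex.I • z₀) : ℝ) : ℂ))
      ((Complex.ofRealCLM.comp ((ContinuousLinearMap.apply ℝ ℝ z₀).comp ((D2 z).comp L)))
        - Complex.I • (Complex.ofRealCLM.comp ((ContinuousLinearMap.apply ℝ ℝ (Complex.I • z₀)).comp ((D2 z).comp L)))) l := by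
    exact (Complex.ofRealCLM.hasFDerivAt.comp l hA).sub
      ((Complex.ofRealCLM.hasFDerivAt.comp l hB).const_mul Complex.I)
  set c : ℂ := ((D2 z z₀ z₀ : ℝ) : ℂ) - Complex.I * ((D2 z z₀ (Complex.I • z₀) : ℝ) : ℂ) with hcdef
  have hrs : (((ContinuousLinearMap.id ℂ ℂ).smulRight c).restrictScalars ℝ) = _ := rfl
  have hres : (((ContinuousLinearMap.id ℂ ℂ).smulRight c).restrictScalars ℝ)
      = ((Complex.ofRealCLM.comp ((ContinuousLinearMap.apply ℝ ℝ z₀).comp ((D2 z).comp L)))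
        - Complex.I • (Complex.ofRealCLM.comp ((ContinuousLinearMap.apply ℝ ℝ (Complex.I • z₀)).comp ((D2 z).comp L)))) := by
    apply clm_ext_RC
    · simp only [ContinuousLinearMap.coe_restrictScalars', ContinuousLinearMap.sub_apply,
        ContinuousLinearMap.smul_apply, ContinuousLinearMap.coe_comp', Function.comp_apply,
        Complex.ofRealCLM_apply, ContinuousLinearMap.apply_apply,
        ContinuousLinearMap.smulRight_apply, ContinuousLinearMap.coe_id', id_eq]
      rw [show (L (1:ℂ)) = z₀ from one_smul ℂ z₀, hcdef]
      simp [smul_eq_mul]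
    · simp only [ContinuousLinearMap.coe_restrictScalars', ContinuousLinearMap.sub_apply,
        ContinuousLinearMap.smul_apply, ContinuousLinearMap.coe_comp', Function.comp_apply,
        Complex.ofRealCLM_apply, ContinuousLinearMap.apply_apply,
        ContinuousLinearMap.smulRight_apply, ContinuousLinearMap.coe_id', id_eq]
      rw [show (L Complex.I) = Complex.I • z₀ from rfl]
      have hsym := symm (Complex.I • z₀) z₀
      have hlap := lap z₀
      rw [hcdef]
      rw [smul_eq_mul]
      have e1 : D2 z (Complex.I • z₀) z₀ = D2 z z₀ (Complex.I • z₀) := hsym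
      have e2 : D2 z (Complex.I • z₀) (Complex.I • z₀) = - D2 z z₀ z₀ := by linarith [lap z₀]
      rw [e1, e2, smul_eq_mul]
      push_cast
      ring_nf
      rw [Complex.I_sq]
      ring
  exact (hasFDerivAt_of_restrictScalars ℝ hg hres).differentiableAt

end core4
section core5
variable {n : ℕ}

lemma exists_nonneg_on_circle {h : CE n → ℝ} {U : Set (CE n)} (hU : IsOpen U)
    (hph : PluriharmonicOn h U) (hh0 : h 0 = 0) (z₀ : CE n) {ρ : ℝ} (hρ : 1 < ρ)
    (hmem : ∀ l : ℂ, ‖l‖ < ρ → l • z₀ ∈ U) :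
    ∃ θ : ℝ, 0 ≤ h (Complex.exp (θ * Complex.I) • z₀) := by
  by_contra hcon
  push_neg at hcon
  obtain ⟨hd1, hd2, hc1⟩ := deriv_pack hU hph.1
  set D1 := fderiv ℝ h with hD1
  set ρ1 : ℝ := (1 + ρ)/2 with hρ1
  have hρ11 : 1 < ρ1 := by rw [hρ1]; linarith
  have hρ1ρ : ρ1 < ρ := by rw [hρ1]; linarith
  have hmem' : ∀ (x θ : ℝ), |x| < ρ → ((x : ℂ) * Complex.exp (θ * Complex.I)) • z₀ ∈ U := by
    intro x θ hx
    apply hmem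
    rw [norm_mul]
    simpa [Complex.norm_exp_ofReal_mul_I] using hx
  have hexp_cont : Continuous fun θ : ℝ => Complex.exp ((θ:ℂ) * Complex.I) :=
    Complex.continuous_exp.comp (Complex.continuous_ofReal.mul continuous_const)
  have hinner_cont : ∀ x : ℝ, Continuous fun θ : ℝ => ((x:ℂ) * Complex.exp ((θ:ℂ) * Complex.I)) • z₀ :=
    fun x => (continuous_const.mul hexp_cont).smul continuous_const
  set F : ℝ → ℝ := fun r => ∫ θ in (0:ℝ)..(2*Real.pi),
    h (((r:ℂ) * Complex.exp ((θ:ℂ)*Complex.I)) • z₀) with hF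
  set Fp : ℝ → ℝ → ℝ := fun r θ =>
    D1 (((r:ℂ)*Complex.exp ((θ:ℂ)*Complex.I)) • z₀) (Complex.exp ((θ:ℂ)*Complex.I) • z₀) with hFp
  set g : ℂ → ℂ := fun l => ((D1 (l • z₀) z₀ : ℝ) : ℂ)
    - Complex.I * ((D1 (l • z₀) (Complex.I • z₀) : ℝ) : ℂ) with hg
  have hgdiff : ∀ l : ℂ, ‖l‖ < ρ → DifferentiableAt ℂ g l :=
    fun l hl => g_holo hU hph z₀ (hmem l hl)
  -- bound on D1 on a compact set
  have hK : IsCompact ((fun l : ℂ => l • z₀) '' Metric.closedBall 0 ρ1) :=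
    (isCompact_closedBall _ _).image (continuous_id.smul continuous_const)
  have hKU : ((fun l : ℂ => l • z₀) '' Metric.closedBall 0 ρ1) ⊆ U := by
    rintro _ ⟨l, hl, rfl⟩
    exact hmem l (lt_of_le_of_lt (mem_closedBall_zero_iff.1 hl) hρ1ρ)
  obtain ⟨M, hM⟩ := hK.exists_bound_of_continuousOn (hc1.mono hKU)
  -- continuity of the integrands
  have hcontF : ∀ x : ℝ, |x| < ρ →
      Continuous fun θ : ℝ => h (((x:ℂ) * Complex.exp ((θ:ℂ)*Complex.I)) • z₀) := by
    intro x hx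
    exact hph.1.continuousOn.comp_continuous (hinner_cont x) (fun θ => hmem' x θ hx)
  have hcontFp : ∀ x : ℝ, |x| < ρ → Continuous (Fp x) := by
    intro x hx
    have c1 : Continuous fun θ : ℝ => D1 (((x:ℂ) * Complex.exp ((θ:ℂ)*Complex.I)) • z₀) := by
      exact hc1.comp_continuous (hinner_cont x) (fun θ => hmem' x θ hx)
    exact c1.clm_apply (hexp_cont.smul continuous_const)
  -- derivative of F
  have key : ∀ r₀ : ℝ, r₀ ∈ Set.Icc (0:ℝ) 1 →
      HasDerivAt F (∫ θ in (0:ℝ)..(2*Real.pi), Fp r₀ θ) r₀ := by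
    intro r₀ hr₀
    have hr₀1 : |r₀| ≤ 1 := by rw [_root_.abs_of_nonneg hr₀.1]; exact hr₀.2
    have hε : (0:ℝ) < ρ1 - 1 := by linarith
    have hball : ∀ x ∈ Metric.ball r₀ (ρ1 - 1), |x| < ρ1 := by
      intro x hx
      have := Real.dist_eq x r₀ ▸ Metric.mem_ball.1 hx
      calc |x| ≤ |x - r₀| + |r₀| := by
            have := abs_sub_abs_le_abs_sub x r₀; linarith [abs_sub_abs_le_abs_sub x r₀]
        _ < (ρ1 - 1) + 1 := by
            have : |x - r₀| < ρ1 - 1 := this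
            linarith
        _ = ρ1 := by ring
    refine (intervalIntegral.hasDerivAt_integral_of_dominated_loc_of_deriv_le
      (F := fun (x : ℝ) (θ : ℝ) => h (((x:ℂ) * Complex.exp ((θ:ℂ)*Complex.I)) • z₀))
      (F' := Fp) (bound := fun _ => M * ‖z₀‖) (Metric.ball_mem_nhds r₀ hε) ?_ ?_ ?_ ?_ ?_ ?_).2
    · filter_upwards [Metric.ball_mem_nhds r₀ hε] with x hx
      exact ((hcontF x ((hball x hx).trans hρ1ρ)).aestronglyMeasurable).restrict
    · exact (hcontF r₀ (lt_of_le_of_lt hr₀1 (lt_trans hρ11 hρ1ρ))).intervalIntegrable _ _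
    · exact ((hcontFp r₀ (lt_of_le_of_lt hr₀1 (lt_trans hρ11 hρ1ρ))).aestronglyMeasurable).restrict
    · refine MeasureTheory.ae_of_all _ fun θ => fun _ x hx => ?_
      have hxρ1 : |x| ≤ ρ1 := le_of_lt (hball x hx)
      have hZK : ((x:ℂ)*Complex.exp ((θ:ℂ)*Complex.I)) • z₀
          ∈ ((fun l : ℂ => l • z₀) '' Metric.closedBall 0 ρ1) := by
        refine ⟨(x:ℂ)*Complex.exp ((θ:ℂ)*Complex.I), ?_, rfl⟩
        rw [Metric.mem_closedBall, dist_zero_right, norm_mul]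
        simpa [Complex.norm_exp_ofReal_mul_I] using hxρ1
      calc ‖Fp x θ‖ ≤ ‖D1 (((x:ℂ)*Complex.exp ((θ:ℂ)*Complex.I)) • z₀)‖
            * ‖Complex.exp ((θ:ℂ)*Complex.I) • z₀‖ :=
          ContinuousLinearMap.le_opNorm _ _
        _ ≤ M * ‖z₀‖ := by
            refine mul_le_mul (hM _ hZK) ?_ (norm_nonneg _) ?_
            · rw [norm_smul]
              simp [Complex.norm_exp_ofReal_mul_I]
            · exact le_trans (norm_nonneg _) (hM _ hZK)
    · exact intervalIntegrable_const
    · refine MeasureTheory.ae_of_all _ fun θ => fun _ x hx => ?_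
      have hxU : ((x:ℂ)*Complex.exp ((θ:ℂ)*Complex.I)) • z₀ ∈ U :=
        hmem' x θ ((hball x hx).trans hρ1ρ)
      have hpt : ∀ y : ℝ, ((y:ℂ)*Complex.exp ((θ:ℂ)*Complex.I)) • z₀
          = y • (Complex.exp ((θ:ℂ)*Complex.I) • z₀) := by
        intro y; rw [mul_smul, coe_smul'']
      have hfun : (fun y : ℝ => h (((y:ℂ) * Complex.exp ((θ:ℂ)*Complex.I)) • z₀))
          = fun y : ℝ => h (y • (Complex.exp ((θ:ℂ)*Complex.I) • z₀)) := by
        funext y; rw [hpt y]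
      rw [hfun]
      have hv : HasDerivAt (fun y : ℝ => y • (Complex.exp ((θ:ℂ)*Complex.I) • z₀))
          (Complex.exp ((θ:ℂ)*Complex.I) • z₀) x := by
        simpa using (hasDerivAt_id x).smul_const (Complex.exp ((θ:ℂ)*Complex.I) • z₀)
      have hfd : HasFDerivAt h (D1 (((x:ℂ)*Complex.exp ((θ:ℂ)*Complex.I)) • z₀))
          (x • (Complex.exp ((θ:ℂ)*Complex.I) • z₀)) := by
        rw [← hpt x]; exact hd1 _ hxU
      exact hfd.comp_hasDerivAt x hv
  -- the derivative is zero
  have hzero : ∀ r₀ ∈ Set.Icc (0:ℝ) 1, (∫ θ in (0:ℝ)..(2*Real.pi), Fp r₀ θ) = 0 := by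
    intro r₀ hr₀
    have hr' : |r₀| < ρ := by rw [_root_.abs_of_nonneg hr₀.1]; linarith [hr₀.2]
    have hgc : Continuous fun θ : ℝ =>
        Complex.exp ((θ:ℂ)*Complex.I) * g ((r₀:ℂ) * Complex.exp ((θ:ℂ)*Complex.I)) := by
      refine hexp_cont.mul ?_
      rw [continuous_iff_continuousAt]; intro θ
      have : ‖(r₀:ℂ) * Complex.exp ((θ:ℂ)*Complex.I)‖ < ρ := by
        rw [norm_mul]
        simpa [Complex.norm_exp_ofReal_mul_I] using hr'
      exact ContinuousAt.comp (f := fun θ : ℝ => (r₀:ℂ) * Complex.exp ((θ:ℂ) * Complex.I))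
        ((hgdiff _ this).continuousAt) ((continuous_const.mul hexp_cont).continuousAt)
    have hptw : Set.EqOn (Fp r₀) (fun θ : ℝ => Complex.reCLM
        (Complex.exp ((θ:ℂ)*Complex.I) * g ((r₀:ℂ) * Complex.exp ((θ:ℂ)*Complex.I))))
        (Set.uIcc (0:ℝ) (2*Real.pi)) := by
      intro θ _
      rw [hFp]
      simp only
      rw [show (Complex.exp ((θ:ℂ)*Complex.I) • z₀ : CE n)
        = (Complex.exp ((θ:ℂ)*Complex.I)).re • z₀
          + (Complex.exp ((θ:ℂ)*Complex.I)).im • (Complex.I • z₀) from csmul_decomp _ z₀]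
      rw [map_add, _root_.map_smul, _root_.map_smul]
      simp [hg, Complex.mul_re, smul_eq_mul]
      try ring
    rw [intervalIntegral.integral_congr hptw,
      ContinuousLinearMap.intervalIntegral_comp_comm _ (hgc.intervalIntegrable _ _)]
    have hmain : (∫ θ in (0:ℝ)..(2*Real.pi),
        Complex.exp ((θ:ℂ)*Complex.I) * g ((r₀:ℂ) * Complex.exp ((θ:ℂ)*Complex.I))) = 0 := by
      rcases eq_or_lt_of_le hr₀.1 with h0 | hpos
      · have : (fun θ : ℝ => Complex.exp ((θ:ℂ)*Complex.I)
            * g ((r₀:ℂ) * Complex.exp ((θ:ℂ)*Complex.I)))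
            = fun θ : ℝ => Complex.exp ((θ:ℂ)*Complex.I) * g 0 := by
          funext θ; rw [← h0]; norm_num
        rw [this, intervalIntegral.integral_mul_const]
        have : (∫ θ in (0:ℝ)..(2*Real.pi), Complex.exp ((θ:ℂ)*Complex.I)) = 0 := by
          have : (fun θ : ℝ => Complex.exp ((θ:ℂ)*Complex.I))
              = fun θ : ℝ => Complex.exp (Complex.I * (θ:ℂ)) := by
            funext θ; rw [mul_comm]
          rw [this, integral_exp_mul_complex Complex.I_ne_zero,
            show Complex.I * ((2*Real.pi : ℝ) : ℂ) = 2*(Real.pi:ℂ)*Complex.I by push_cast; ring,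
            Complex.exp_two_pi_mul_I]
          simp
        rw [this, zero_mul]
      · have hcont : ContinuousOn g (Metric.closedBall 0 r₀) := by
          intro l hl
          have : ‖l‖ < ρ := lt_of_le_of_lt (mem_closedBall_zero_iff.1 hl)
            (lt_of_le_of_lt hr₀.2 hρ)
          exact ((hgdiff l this).continuousAt).continuousWithinAt
        have hdiff : ∀ l ∈ Metric.ball (0:ℂ) r₀ \ (∅ : Set ℂ), DifferentiableAt ℂ g l := by
          intro l hl
          have : ‖l‖ < ρ := lt_of_lt_of_le (mem_ball_zero_iff.1 hl.1)
            (le_trans hr₀.2 (le_of_lt hρ))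
          exact hgdiff l this
        have hC := Complex.circleIntegral_eq_zero_of_differentiable_on_off_countable
          (le_of_lt hpos) Set.countable_empty hcont hdiff
        rw [circleIntegral] at hC
        simp only [deriv_circleMap, circleMap_zero, smul_eq_mul] at hC
        have hr0 : ((r₀:ℂ)) ≠ 0 := by
          simp only [ne_eq, Complex.ofReal_eq_zero]; exact ne_of_gt hpos
        have heq : (fun θ : ℝ => Complex.exp ((θ:ℂ)*Complex.I)
              * g ((r₀:ℂ) * Complex.exp ((θ:ℂ)*Complex.I)))
            = fun θ : ℝ => ((r₀:ℂ) * Complex.I)⁻¹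
              • (((r₀:ℂ) * Complex.exp ((θ:ℂ)*Complex.I) * Complex.I)
                * g ((r₀:ℂ) * Complex.exp ((θ:ℂ)*Complex.I))) := by
          funext θ
          rw [smul_eq_mul]
          field_simp
        rw [heq, intervalIntegral.integral_smul, hC, smul_zero]
    rw [hmain]
    simp
  -- F is constant on [0,1]
  have hFcont : ContinuousOn F (Set.Icc (0:ℝ) 1) :=
    fun r hr => ((key r hr).continuousAt).continuousWithinAt
  have hFconst := constant_of_has_deriv_right_zero hFcont (fun x hx => by
    have hx' : x ∈ Set.Icc (0:ℝ) 1 := ⟨hx.1, le_of_lt hx.2⟩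
    have := key x hx'
    rw [hzero x hx'] at this
    exact this.hasDerivWithinAt)
  have hF10 : F 1 = F 0 := hFconst 1 ⟨zero_le_one, le_refl 1⟩
  have hF0 : F 0 = 0 := by
    rw [hF]
    simp only [Complex.ofReal_zero, zero_mul, zero_smul, hh0]
    simp
  have hF1 : F 1 < 0 := by
    have hpos : 0 < ∫ θ in (0:ℝ)..(2*Real.pi),
        -(h ((((1:ℝ):ℂ) * Complex.exp ((θ:ℂ)*Complex.I)) • z₀)) := by
      refine intervalIntegral.intervalIntegral_pos_of_pos_on ?_ ?_ Real.two_pi_pos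
      · exact ((hcontF 1 (by simpa using hρ)).neg).intervalIntegrable _ _
      · intro θ _
        have := hcon θ
        simp only [Complex.ofReal_one, one_mul]
        linarith
    rw [intervalIntegral.integral_neg] at hpos
    rw [hF]
    simp only [Complex.ofReal_one, one_mul] at hpos ⊢
    linarith
  rw [hF10, hF0] at hF1
  exact absurd hF1 (lt_irrefl 0)

end core5
section core6
variable {n : ℕ}

lemma pluriharmonicOn_neg {h : CE n → ℝ} {U : Set (CE n)} (hph : PluriharmonicOn h U) :
    PluriharmonicOn (fun z => -h z) U := by
  refine ⟨hph.1.neg, fun z hz i j => ?_⟩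
  have hneg1 : (fun w' => (((fun z => -h z) w' : ℝ) : ℂ)) = fun w' => -(((h w' : ℝ)) : ℂ) := by
    funext w'; push_cast; ring
  have hwD : ∀ w, wD (fun w' => (((fun z => -h z) w' : ℝ) : ℂ)) i w
      = -wD (fun w' => ((h w' : ℝ) : ℂ)) i w := by
    intro w
    rw [hneg1]
    simp only [wD, fderiv_fun_neg, ContinuousLinearMap.neg_apply]
    ring
  have : chess (fun z => -h z) i j z = - chess h i j z := by
    simp only [chess, wDbar]
    rw [show (fun w => wD (fun w' => (((fun z => -h z) w' : ℝ) : ℂ)) i w)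
      = fun w => -wD (fun w' => ((h w' : ℝ) : ℂ)) i w from funext hwD]
    rw [fderiv_fun_neg]
    simp only [ContinuousLinearMap.neg_apply]
    ring
  rw [this, hph.2 z hz i j, neg_zero]

lemma exists_nonpos_on_circle {h : CE n → ℝ} {U : Set (CE n)} (hU : IsOpen U)
    (hph : PluriharmonicOn h U) (hh0 : h 0 = 0) (z₀ : CE n) {ρ : ℝ} (hρ : 1 < ρ)
    (hmem : ∀ l : ℂ, ‖l‖ < ρ → l • z₀ ∈ U) :
    ∃ θ : ℝ, h (Complex.exp (θ * Complex.I) • z₀) ≤ 0 := by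
  obtain ⟨θ, hθ⟩ := exists_nonneg_on_circle hU (pluriharmonicOn_neg hph)
    (by simpa using hh0) z₀ hρ hmem
  exact ⟨θ, by linarith [hθ]⟩

-- ellipsoid facts
lemma qform_smul {A : Matrix (Fin n) (Fin n) ℂ} (l : ℂ) (w : Fin n → ℂ) :
    qform A (l • w) = Complex.normSq l * qform A w := by
  simp only [qform, Matrix.mulVec_smul, star_smul, smul_dotProduct,
    dotProduct_smul, smul_eq_mul]
  rw [← mul_assoc, show l * star l = ((Complex.normSq l : ℝ) : ℂ) from Complex.mul_conj l,
    Complex.re_ofReal_mul]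

end core6
section core7
variable {n : ℕ}

lemma mem_dilate_zero {c : ℝ} {S : Set (CE n)} {x : CE n} :
    x ∈ dilate c 0 S ↔ ∃ y ∈ S, x = c • y := by
  simp only [dilate, Set.mem_image, sub_zero, zero_add]
  exact ⟨fun ⟨y, hy, hxy⟩ => ⟨y, hy, hxy.symm⟩, fun ⟨y, hy, hxy⟩ => ⟨y, hy, hxy.symm⟩⟩

lemma pi_of_ce_smul (l : ℂ) (y : CE n) :
    (fun i => (l • y : CE n) i) = l • (fun i => y i) := rfl

lemma dilate_circled {A : Matrix (Fin n) (Fin n) ℂ} {μ : ℝ} {E : Set (CE n)}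
    (hE : E = {z : CE n | qform A (fun i => z i) ≤ μ}) (l : ℂ) (hl : Complex.normSq l = 1)
    {c : ℝ} {x : CE n} (hx : x ∈ dilate c 0 E) : l • x ∈ dilate c 0 E := by
  obtain ⟨y, hy, rfl⟩ := mem_dilate_zero.1 hx
  refine mem_dilate_zero.2 ⟨l • y, ?_, (smul_comm _ _ _)⟩
  rw [hE] at hy ⊢
  rw [Set.mem_setOf_eq, pi_of_ce_smul, qform_smul, hl, one_mul]
  exact hy

lemma norm_exp_smul (θ : ℝ) (x : CE n) :
    ‖(Complex.exp ((θ:ℂ) * Complex.I) • x : CE n)‖ = ‖x‖ := by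
  rw [norm_smul]
  simp [Complex.norm_exp_ofReal_mul_I]

lemma exp_smul_inv (θ : ℝ) (x : CE n) :
    Complex.exp (((-θ : ℝ):ℂ) * Complex.I) • (Complex.exp ((θ:ℂ) * Complex.I) • x) = x := by
  rw [smul_smul, ← Complex.exp_add, show ((-θ:ℝ):ℂ) * Complex.I + (θ:ℂ)*Complex.I = 0 by
    push_cast; ring, Complex.exp_zero, one_smul]

lemma normSq_exp (θ : ℝ) : Complex.normSq (Complex.exp ((θ:ℂ) * Complex.I)) = 1 := by
  rw [Complex.normSq_eq_norm_sq, Complex.norm_exp_ofReal_mul_I, one_pow]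

end core7

theorem uniqueness_of_shape' (n : ℕ) (hn : 0 < n)
    (U : Set (CE n)) (hU : IsOpen U) (h0U : (0 : CE n) ∈ U)
    (u h : CE n → ℝ) (hph : PluriharmonicOn h U) (hh0 : h 0 = 0)
    (γ μ : ℝ) (hγ : 0 < γ) (hγ1 : γ < 1) (hμ : 0 < μ)
    (A : Matrix (Fin n) (Fin n) ℂ) (hA : A.PosDef)
    (E : Set (CE n)) (hE : E = {z : CE n | qform A (fun i => z i) ≤ μ})
    (h1 : ball (0 : CE n) ((1 - γ) * Real.sqrt μ) ⊆ {z ∈ U | u z ≤ u 0 + μ})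
    (h2 : {z ∈ U | u z ≤ u 0 + μ} ⊆ ball (0 : CE n) ((1 + γ) * Real.sqrt μ))
    (h3 : ball (0 : CE n) ((1 + γ) * Real.sqrt μ) ⊆ U)
    (h4 : dilate (1 - γ) 0 E ⊆ {z ∈ U | u z ≤ h z + u 0 + μ})
    (h5 : {z ∈ U | u z ≤ h z + u 0 + μ} ⊆ dilate (1 + γ) 0 E)
    (h6 : dilate (1 + γ) 0 E ⊆ U) :
    ball (0 : CE n) ((1 - γ) * Real.sqrt μ) ⊆ dilate (1 + γ) 0 E ∧
    dilate (1 - γ) 0 E ⊆ ball (0 : CE n) ((1 + γ) * Real.sqrt μ) := by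
  have hsqμ : 0 < Real.sqrt μ := Real.sqrt_pos.2 hμ
  have hR1 : 0 < (1 - γ) * Real.sqrt μ := mul_pos (by linarith) hsqμ
  constructor
  · intro z₀ hz₀
    have hz₀n : ‖z₀‖ < (1 - γ) * Real.sqrt μ := mem_ball_zero_iff.1 hz₀
    have hmm : ∃ ρ : ℝ, 1 < ρ ∧ ∀ l : ℂ, ‖l‖ < ρ → l • z₀ ∈ U := by
      by_cases hz0 : z₀ = 0
      · exact ⟨2, one_lt_two, fun l _ => by simp [hz0]; exact h0U⟩
      · have hnz : 0 < ‖z₀‖ := norm_pos_iff.2 hz0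
        refine ⟨((1 - γ) * Real.sqrt μ)/‖z₀‖, (one_lt_div hnz).2 hz₀n, fun l hl => ?_⟩
        have : ‖l • z₀‖ < (1 - γ) * Real.sqrt μ := by
          rw [norm_smul]
          calc ‖l‖ * ‖z₀‖ < (((1 - γ) * Real.sqrt μ)/‖z₀‖) * ‖z₀‖ :=
                mul_lt_mul_of_pos_right hl hnz
            _ = (1 - γ) * Real.sqrt μ := by field_simp
        exact (h1 (mem_ball_zero_iff.2 this)).1
    obtain ⟨ρ, hρ, hmem⟩ := hmm
    obtain ⟨θ, hθ⟩ := exists_nonneg_on_circle hU hph hh0 z₀ hρ hmem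
    set z := Complex.exp ((θ:ℂ) * Complex.I) • z₀ with hzdef
    have hzball : z ∈ ball (0 : CE n) ((1 - γ) * Real.sqrt μ) := by
      rw [mem_ball_zero_iff, hzdef, norm_exp_smul]
      exact hz₀n
    obtain ⟨hzU, hzu⟩ := h1 hzball
    have : z ∈ {z ∈ U | u z ≤ h z + u 0 + μ} := ⟨hzU, by linarith⟩
    have hzd : z ∈ dilate (1 + γ) 0 E := h5 this
    have := dilate_circled hE (Complex.exp (((-θ:ℝ):ℂ) * Complex.I)) (normSq_exp (-θ)) hzd
    rwa [hzdef, exp_smul_inv] at this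
  · intro z₀ hz₀
    obtain ⟨y, hy, rfl⟩ := mem_dilate_zero.1 hz₀
    have hyq : qform A (fun i => y i) ≤ μ := by rw [hE] at hy; exact hy
    have hyq0 : 0 ≤ qform A (fun i => y i) := by
      have := hA.posSemidef.dotProduct_mulVec_nonneg (fun i => y i)
      exact (Complex.le_def.1 this).1
    have hγρ : (1:ℝ) < (1 + γ)/(1 - γ) := by
      rw [lt_div_iff₀ (by linarith)]; linarith
    have hmem : ∀ l : ℂ, ‖l‖ < (1 + γ)/(1 - γ) → l • ((1 - γ) • y : CE n) ∈ U := by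
      intro l hl
      apply h6
      set c : ℂ := l * (((1 - γ)/(1 + γ) : ℝ) : ℂ) with hcdef
      have hcn : ‖c‖ < 1 := by
        rw [hcdef, norm_mul]
        have : ‖(((1 - γ)/(1 + γ) : ℝ) : ℂ)‖ = (1 - γ)/(1 + γ) := by
          rw [Complex.norm_real, Real.norm_eq_abs, _root_.abs_of_pos]
          exact div_pos (by linarith) (by linarith)
        rw [this]
        calc ‖l‖ * ((1 - γ)/(1 + γ)) < ((1 + γ)/(1 - γ)) * ((1 - γ)/(1 + γ)) := by
              exact mul_lt_mul_of_pos_right hl (div_pos (by linarith) (by linarith))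
          _ = 1 := by
              have hne1 : (1 - γ:ℝ) ≠ 0 := by linarith
              have hne2 : (1 + γ:ℝ) ≠ 0 := by linarith
              field_simp
              try ring
      refine mem_dilate_zero.2 ⟨c • y, ?_, ?_⟩
      · rw [hE, Set.mem_setOf_eq, pi_of_ce_smul, qform_smul]
        have h1' : Complex.normSq c ≤ 1 := by
          rw [Complex.normSq_eq_norm_sq]
          nlinarith [norm_nonneg c]
        nlinarith
      · rw [← coe_smul'' (1 + γ) (c • y), smul_smul, ← coe_smul'' (1 - γ) y, smul_smul]
        congr 1
        rw [hcdef]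
        have hne1 : (1 - γ:ℝ) ≠ 0 := by linarith
        have hne2 : (1 + γ:ℝ) ≠ 0 := by linarith
        push_cast
        field_simp
        try ring
    obtain ⟨θ, hθ⟩ := exists_nonpos_on_circle hU hph hh0 ((1 - γ) • y) hγρ hmem
    set z := Complex.exp ((θ:ℂ) * Complex.I) • ((1 - γ) • y : CE n) with hzdef
    have hzd : z ∈ dilate (1 - γ) 0 E := dilate_circled hE _ (normSq_exp θ) hz₀
    obtain ⟨hzU, hzu⟩ := h4 hzd
    have : z ∈ {z ∈ U | u z ≤ u 0 + μ} := ⟨hzU, by linarith⟩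
    have hzball := h2 this
    rw [mem_ball_zero_iff] at hzball ⊢
    calc ‖((1 - γ) • y : CE n)‖ = ‖z‖ := (norm_exp_smul θ _).symm
      _ < (1 + γ) * Real.sqrt μ := hzball

/-- Uniqueness of shape of sections: if a sublevel set of `u` is trapped between the
`(1∓γ)`-balls of radius `√μ` and, after subtracting a pluriharmonic `h` with
`h(0) = 0`, a sublevel set at the same height is trapped between the `(1∓γ)`-dilates
of an ellipsoid `E_μ(0)`, then the ball and the ellipsoid are comparable:
`B_{(1−γ)√μ}(0) ⊆ (1+γ)E_μ(0)` and `(1−γ)E_μ(0) ⊆ B_{(1+γ)√μ}(0)`. -/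
theorem uniqueness_of_shape (n : ℕ) (hn : 0 < n)
    (U : Set (CE n)) (hU : IsOpen U) (h0U : (0 : CE n) ∈ U)
    (u h : CE n → ℝ) (hph : PluriharmonicOn h U) (hh0 : h 0 = 0)
    (γ μ : ℝ) (hγ : 0 < γ) (hγ1 : γ < 1) (hμ : 0 < μ)
    (A : Matrix (Fin n) (Fin n) ℂ) (hA : A.PosDef)
    (E : Set (CE n)) (hE : E = {z : CE n | qform A (fun i => z i) ≤ μ})
    (h1 : ball (0 : CE n) ((1 - γ) * Real.sqrt μ) ⊆ {z ∈ U | u z ≤ u 0 + μ})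
    (h2 : {z ∈ U | u z ≤ u 0 + μ} ⊆ ball (0 : CE n) ((1 + γ) * Real.sqrt μ))
    (h3 : ball (0 : CE n) ((1 + γ) * Real.sqrt μ) ⊆ U)
    (h4 : dilate (1 - γ) 0 E ⊆ {z ∈ U | u z ≤ h z + u 0 + μ})
    (h5 : {z ∈ U | u z ≤ h z + u 0 + μ} ⊆ dilate (1 + γ) 0 E)
    (h6 : dilate (1 + γ) 0 E ⊆ U) :
    ball (0 : CE n) ((1 - γ) * Real.sqrt μ) ⊆ dilate (1 + γ) 0 E ∧
    dilate (1 - γ) 0 E ⊆ ball (0 : CE n) ((1 + γ) * Real.sqrt μ) := by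
  exact uniqueness_of_shape' n hn U hU h0U u h hph hh0 γ μ hγ hγ1 hμ A hA E hE h1 h2 h3 h4 h5 h6
end
end
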